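/- Let H be a finite-dimensional complex inner product space, ψ ∈ H a unit vector, and P₁, ..., P_L orthogonal projections on H. Then 1 - √(⟨ψ, P_L ψ⟩) · √(⟨ψ, P₁⋯P_{L-1} P_L P_{L-1}⋯P₁ ψ⟩) ≤ ∑_{i=1}^{L} √(⟨ψ, Q_i ψ⟩) · √(⟨ψ, P₁⋯P_{i-1} Q_i P_{i-1}⋯P₁ ψ⟩), where Q_i = I - P_i and empty products are the identity. -/

import Mathlib

open scoped InnerProductSpace

/-- `descComp P k = P k ∘ P (k-1) ∘ ⋯ ∘ P 1`, empty composition is the identity. -/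
def descComp {H : Type*} [AddCommGroup H] [Module ℂ H]
    (P : ℕ → (H →ₗ[ℂ] H)) : ℕ → (H →ₗ[ℂ] H)
  | 0 => 1
  | k + 1 => P (k + 1) ∘ₗ descComp P k

/-- `ascComp P k = P 1 ∘ P 2 ∘ ⋯ ∘ P k`, empty composition is the identity. -/
def ascComp {H : Type*} [AddCommGroup H] [Module ℂ H]
    (P : ℕ → (H →ₗ[ℂ] H)) : ℕ → (H →ₗ[ℂ] H)
  | 0 => 1
  | k + 1 => ascComp P k ∘ₗ P (k + 1)

lemma sqrt_inner_eq_norm {H : Type*} [NormedAddCommGroup H] [InnerProductSpace ℂ H]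
    (A : H →ₗ[ℂ] H) (hA : A.IsSymmetric) (hA2 : A ∘ₗ A = A) (x : H) :
    Real.sqrt ((⟪x, A x⟫_ℂ).re) = ‖A x‖ := by
  have h1 : ⟪x, A x⟫_ℂ = ⟪A x, A x⟫_ℂ := by
    conv_lhs => rw [← hA2]
    rw [LinearMap.comp_apply]
    exact (hA x (A x)).symm
  have h2 : (⟪A x, A x⟫_ℂ).re = ‖A x‖ ^ 2 := inner_self_eq_norm_sq (𝕜 := ℂ) (A x)
  rw [h1, h2, Real.sqrt_sq (norm_nonneg _)]

lemma asc_adj {H : Type*} [NormedAddCommGroup H] [InnerProductSpace ℂ H]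
    (P : ℕ → (H →ₗ[ℂ] H)) (L : ℕ)
    (hsym : ∀ i ∈ Finset.Icc 1 L, (P i).IsSymmetric) :
    ∀ k, k ≤ L → ∀ x y : H, ⟪x, ascComp P k y⟫_ℂ = ⟪descComp P k x, y⟫_ℂ := by
  intro k
  induction k with
  | zero => intro _ x y; simp [ascComp, descComp]
  | succ k ih =>
    intro hk x y
    have hs := hsym (k + 1) (Finset.mem_Icc.2 ⟨Nat.succ_le_succ (Nat.zero_le k), hk⟩)
    rw [show ascComp P (k+1) = ascComp P k ∘ₗ P (k+1) from rfl,
        show descComp P (k+1) = P (k+1) ∘ₗ descComp P k from rfl,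
        LinearMap.comp_apply, LinearMap.comp_apply,
        ih (Nat.le_of_succ_le hk), hs]

theorem stmt2 {H : Type*} [NormedAddCommGroup H] [InnerProductSpace ℂ H]
    [FiniteDimensional ℂ H] (L : ℕ) (hL : 1 ≤ L) (P : ℕ → (H →ₗ[ℂ] H))
    (hsym : ∀ i ∈ Finset.Icc 1 L, (P i).IsSymmetric)
    (hidem : ∀ i ∈ Finset.Icc 1 L, P i ∘ₗ P i = P i)
    (ψ : H) (hψ : ‖ψ‖ = 1) :
    1 - Real.sqrt ((⟪ψ, P L ψ⟫_ℂ).re) *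
          Real.sqrt ((⟪ψ, (ascComp P (L - 1) ∘ₗ P L ∘ₗ descComp P (L - 1)) ψ⟫_ℂ).re)
      ≤ ∑ i ∈ Finset.Icc 1 L,
          Real.sqrt ((⟪ψ, (1 - P i) ψ⟫_ℂ).re) *
            Real.sqrt
              ((⟪ψ, (ascComp P (i - 1) ∘ₗ (1 - P i) ∘ₗ descComp P (i - 1)) ψ⟫_ℂ).re) := by
  -- Q i := 1 - P i is symmetric and idempotent
  have hQsym : ∀ i ∈ Finset.Icc 1 L, ((1 : H →ₗ[ℂ] H) - P i).IsSymmetric := by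
    intro i hi x y
    have h := hsym i hi x y
    simp only [LinearMap.sub_apply, Module.End.one_apply, inner_sub_left, inner_sub_right, h]
  have hQidem : ∀ i ∈ Finset.Icc 1 L,
      ((1 : H →ₗ[ℂ] H) - P i) ∘ₗ ((1 : H →ₗ[ℂ] H) - P i) = (1 : H →ₗ[ℂ] H) - P i := by
    intro i hi
    have h := hidem i hi
    rw [← Module.End.mul_eq_comp] at h ⊢
    rw [mul_sub, sub_mul, sub_mul, one_mul, mul_one, h]
    abel
  set f : ℕ → ℝ := fun j => (⟪ψ, descComp P j ψ⟫_ℂ).re with hf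
  -- per term bound
  have hterm : ∀ i ∈ Finset.Icc 1 L,
      f (i - 1) - f i ≤
        Real.sqrt ((⟪ψ, (1 - P i) ψ⟫_ℂ).re) *
          Real.sqrt ((⟪ψ, (ascComp P (i - 1) ∘ₗ (1 - P i) ∘ₗ descComp P (i - 1)) ψ⟫_ℂ).re) := by
    intro i hi
    obtain ⟨hi1, hiL⟩ := Finset.mem_Icc.1 hi
    set Q : H →ₗ[ℂ] H := 1 - P i with hQ
    set x : H := descComp P (i - 1) ψ with hx
    have hqs := hQsym i hi
    have hqi := hQidem i hi
    have e1 : Real.sqrt ((⟪ψ, Q ψ⟫_ℂ).re) = ‖Q ψ‖ := sqrt_inner_eq_norm Q hqs hqi ψ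
    have e2 : Real.sqrt ((⟪ψ, (ascComp P (i - 1) ∘ₗ Q ∘ₗ descComp P (i - 1)) ψ⟫_ℂ).re)
        = ‖Q x‖ := by
      rw [LinearMap.comp_apply, LinearMap.comp_apply,
        asc_adj P L hsym (i - 1) (le_trans (Nat.sub_le i 1) hiL) ψ (Q (descComp P (i-1) ψ))]
      exact sqrt_inner_eq_norm Q hqs hqi x
    rw [e1, e2]
    -- f (i-1) - f i = re ⟪ψ, Q x⟫ = re ⟪Q ψ, Q x⟫ ≤ ‖Q ψ‖ * ‖Q x‖
    have hdesc : descComp P i ψ = P i x := by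
      rw [hx, ← Nat.succ_pred_eq_of_pos (Nat.lt_of_lt_of_le Nat.zero_lt_one hi1)]
      rfl
    have step : f (i - 1) - f i = (⟪ψ, Q x⟫_ℂ).re := by
      rw [hf]
      simp only [hdesc, hQ, LinearMap.sub_apply, Module.End.one_apply, inner_sub_right,
        Complex.sub_re]
      rfl
    have hxx : Q (Q x) = Q x := by
      have := DFunLike.congr_fun hqi x
      rwa [LinearMap.comp_apply] at this
    have step2 : ⟪ψ, Q x⟫_ℂ = ⟪Q ψ, Q x⟫_ℂ := by
      conv_lhs => rw [← hxx]
      exact (hqs ψ (Q x)).symm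
    have := re_inner_le_norm (𝕜 := ℂ) (Q ψ) (Q x)
    rw [step, step2]
    exact this
  -- the telescoping sum
  have hsum : ∑ i ∈ Finset.Icc 1 L, (f (i - 1) - f i) = f 0 - f L := by
    have : Finset.Icc 1 L = Finset.Ico 1 (L + 1) := by
      rw [Finset.Ico_add_one_right_eq_Icc]
    rw [this, Finset.sum_Ico_eq_sum_range]
    simp only [Nat.add_sub_cancel]
    have : ∀ j ∈ Finset.range L, f (1 + j - 1) - f (1 + j) = f j - f (j + 1) := by
      intro j _
      congr 1
      · congr 1; omega
      · congr 1; omega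
    rw [Finset.sum_congr rfl this, Finset.sum_range_sub' f L]
  have hf0 : f 0 = 1 := by
    have : (⟪ψ, ψ⟫_ℂ).re = ‖ψ‖ ^ 2 := inner_self_eq_norm_sq (𝕜 := ℂ) ψ
    simp [hf, descComp, this, hψ]
  -- LHS bound
  have hLmem : L ∈ Finset.Icc 1 L := Finset.mem_Icc.2 ⟨hL, le_refl L⟩
  set x : H := descComp P (L - 1) ψ with hx
  have e1 : Real.sqrt ((⟪ψ, P L ψ⟫_ℂ).re) = ‖P L ψ‖ :=
    sqrt_inner_eq_norm (P L) (hsym L hLmem) (hidem L hLmem) ψ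
  have e2 : Real.sqrt ((⟪ψ, (ascComp P (L - 1) ∘ₗ P L ∘ₗ descComp P (L - 1)) ψ⟫_ℂ).re)
      = ‖P L x‖ := by
    rw [LinearMap.comp_apply, LinearMap.comp_apply,
      asc_adj P L hsym (L - 1) (Nat.sub_le L 1) ψ (P L (descComp P (L-1) ψ))]
    exact sqrt_inner_eq_norm (P L) (hsym L hLmem) (hidem L hLmem) x
  have hdescL : descComp P L ψ = P L x := by
    rw [hx, ← Nat.succ_pred_eq_of_pos (Nat.lt_of_lt_of_le Nat.zero_lt_one hL)]
    rfl
  have hfL : f L ≤ ‖P L ψ‖ * ‖P L x‖ := by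
    have hxx : P L (P L x) = P L x := by
      have := DFunLike.congr_fun (hidem L hLmem) x
      rwa [LinearMap.comp_apply] at this
    have step2 : ⟪ψ, P L x⟫_ℂ = ⟪P L ψ, P L x⟫_ℂ := by
      conv_lhs => rw [← hxx]
      exact (hsym L hLmem ψ (P L x)).symm
    have := re_inner_le_norm (𝕜 := ℂ) (P L ψ) (P L x)
    rw [hf]
    simp only [hdescL]
    rw [step2]
    exact this
  calc 1 - Real.sqrt ((⟪ψ, P L ψ⟫_ℂ).re) *
          Real.sqrt ((⟪ψ, (ascComp P (L - 1) ∘ₗ P L ∘ₗ descComp P (L - 1)) ψ⟫_ℂ).re)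
      = 1 - ‖P L ψ‖ * ‖P L x‖ := by rw [e1, e2]
    _ ≤ 1 - f L := by linarith
    _ = f 0 - f L := by rw [hf0]
    _ = ∑ i ∈ Finset.Icc 1 L, (f (i - 1) - f i) := hsum.symm
    _ ≤ _ := Finset.sum_le_sum hterm
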